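/- arXiv:1610.00913 — 3 statements merged into one kernel-verified Lean document; each statement's English description precedes it below -/
import Mathlib

section
/- Let Ω ⊆ ℝⁿ be a nonempty open set, t₀ ∈ ℝ, and let H : ℝ × ℝⁿ → ℝⁿ be continuous on [t₀,∞) × Ω and locally Lipschitz in its second (state) argument there. Then for every initial condition ξ⁰ ∈ Ω there exist t_max ∈ (t₀, ∞] and a function ξ : [t₀, t_max) → ℝⁿ with ξ(t₀) = ξ⁰ such that ξ(t) ∈ Ω and ξ has derivative H(t, ξ(t)) at every t ∈ [t₀, t_max), and this solution is maximal: there is no t₁ > t_max together with a function ζ : [t₀, t₁) → Ω solving the same initial value problem and agreeing with ξ on [t₀, t_max). -/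
set_option linter.unusedSectionVars false
set_option linter.unusedVariables false
set_option maxHeartbeats 1000000

open Set MeasureTheory intervalIntegral Filter Topology NNReal



variable {E : Type*} [NormedAddCommGroup E] [NormedSpace ℝ E] [FiniteDimensional ℝ E]

section FStep

variable (G : ℝ → E → E) (t₀ : ℝ) (x₀ : E) (h : ℝ)

/-- One Tonelli step: delayed Picard map. -/
noncomputable def tonelliF (g : ℝ → E) : ℝ → E :=
  fun t => x₀ + ∫ s in t₀..(max t₀ (t - h)), G s (g s)

variable {G t₀ x₀ h}

lemma tonelliF_lipschitz {C : ℝ≥0} (hG : Continuous (Function.uncurry G))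
    (hb : ∀ t x, ‖G t x‖ ≤ C)
    (g : ℝ → E) (hg : Continuous g) : LipschitzWith C (tonelliF G t₀ x₀ h g) := by
  have hcont : Continuous (fun s => G s (g s)) := by
    exact hG.comp (continuous_id.prodMk hg)
  have hint : ∀ a b : ℝ, IntervalIntegrable (fun s => G s (g s)) volume a b :=
    fun a b => hcont.intervalIntegrable a b
  apply LipschitzWith.of_dist_le_mul
  intro t t'
  have key : tonelliF G t₀ x₀ h g t - tonelliF G t₀ x₀ h g t'
      = ∫ s in (max t₀ (t' - h))..(max t₀ (t - h)), G s (g s) := by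
    simp only [tonelliF, add_sub_add_left_eq_sub]
    exact integral_interval_sub_left (hint _ _) (hint _ _)
  rw [dist_eq_norm, key]
  calc ‖∫ s in (max t₀ (t' - h))..(max t₀ (t - h)), G s (g s)‖
      ≤ C * |max t₀ (t - h) - max t₀ (t' - h)| :=
        norm_integral_le_of_norm_le_const (fun s _ => hb s (g s))
    _ ≤ C * dist t t' := by
        refine mul_le_mul_of_nonneg_left ?_ C.coe_nonneg
        rw [Real.dist_eq, max_comm t₀ (t - h), max_comm t₀ (t' - h)]
        calc |max (t - h) t₀ - max (t' - h) t₀| ≤ |(t - h) - (t' - h)| :=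
              abs_max_sub_max_le_abs _ _ _
          _ = |t - t'| := by ring_nf

lemma tonelliF_continuous {C : ℝ≥0} (hG : Continuous (Function.uncurry G))
    (hb : ∀ t x, ‖G t x‖ ≤ C)
    (g : ℝ → E) (hg : Continuous g) : Continuous (tonelliF G t₀ x₀ h g) :=
  (tonelliF_lipschitz hG hb g hg).continuous

lemma tonelliF_dist_le {C : ℝ≥0} (hG : Continuous (Function.uncurry G))
    (hb : ∀ t x, ‖G t x‖ ≤ C)
    (hh : 0 ≤ h) (g : ℝ → E) (hg : Continuous g) (t : ℝ) (ht : t₀ ≤ t) :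
    ‖tonelliF G t₀ x₀ h g t - x₀‖ ≤ C * (t - t₀) := by
  have hcont : Continuous (fun s => G s (g s)) := hG.comp (continuous_id.prodMk hg)
  simp only [tonelliF, add_sub_cancel_left]
  calc ‖∫ s in t₀..(max t₀ (t - h)), G s (g s)‖
      ≤ C * |max t₀ (t - h) - t₀| :=
        norm_integral_le_of_norm_le_const (fun s _ => hb s (g s))
    _ ≤ C * (t - t₀) := by
        refine mul_le_mul_of_nonneg_left ?_ C.coe_nonneg
        rw [abs_of_nonneg (by simp [le_max_left])]
        have : max t₀ (t - h) ≤ t := max_le ht (by linarith)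
        linarith

lemma tonelliF_eq_of_eqOn {g₁ g₂ : ℝ → E} {b : ℝ} (hb : t₀ ≤ b) (hh : 0 ≤ h)
    (heq : EqOn g₁ g₂ (Icc t₀ b)) :
    EqOn (tonelliF G t₀ x₀ h g₁) (tonelliF G t₀ x₀ h g₂) (Iic (b + h)) := by
  intro t ht
  simp only [tonelliF]
  congr 1
  apply intervalIntegral.integral_congr
  intro s hs
  rw [uIcc_of_le (le_max_left _ _)] at hs
  have hs2 : s ∈ Icc t₀ b := ⟨hs.1, hs.2.trans (max_le hb (by
    simp only [mem_Iic] at ht; linarith))⟩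
  simp only []
  rw [heq hs2]

end FStep

section Approx

variable (G : ℝ → E → E) (t₀ : ℝ) (x₀ : E) (δ : ℝ)

/-- The `n`-th Tonelli approximation (delay `δ/(n+1)`). -/
noncomputable def tonelliApprox (n : ℕ) : ℝ → E :=
  (tonelliF G t₀ x₀ (δ/(n+1)))^[n+2] (fun _ => x₀)

variable {G t₀ x₀ δ} {C : ℝ≥0}

lemma tonelliF_iterate_continuous (hG : Continuous (Function.uncurry G))
    (hb : ∀ t x, ‖G t x‖ ≤ C) {h : ℝ} (k : ℕ) :
    Continuous ((tonelliF G t₀ x₀ h)^[k] (fun _ => x₀)) := by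
  induction k with
  | zero => exact continuous_const
  | succ k ih =>
      rw [Function.iterate_succ_apply']
      exact tonelliF_continuous hG hb _ ih

lemma tonelliF_iterate_eqOn (hG : Continuous (Function.uncurry G))
    (hb : ∀ t x, ‖G t x‖ ≤ C) {h : ℝ} (hh : 0 ≤ h) (k : ℕ) :
    EqOn ((tonelliF G t₀ x₀ h)^[k+1] (fun _ => x₀))
      ((tonelliF G t₀ x₀ h)^[k] (fun _ => x₀)) (Iic (t₀ + k*h)) := by
  induction k with
  | zero =>
      intro t ht
      simp only [mem_Iic, Nat.cast_zero, zero_mul, add_zero] at ht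
      rw [Function.iterate_succ_apply', Function.iterate_zero_apply]
      show x₀ + _ = _
      rw [max_eq_left (by linarith), intervalIntegral.integral_same, add_zero]
  | succ k ih =>
      have hk : (0:ℝ) ≤ k * h := by positivity
      have h2 : EqOn ((tonelliF G t₀ x₀ h)^[k+1] (fun _ => x₀))
          ((tonelliF G t₀ x₀ h)^[k] (fun _ => x₀)) (Icc t₀ (t₀ + k*h)) :=
        ih.mono (Icc_subset_Iic_self)
      have h3 := tonelliF_eq_of_eqOn (G := G) (x₀ := x₀) (by linarith) hh h2
      have : t₀ + (k:ℝ) * h + h = t₀ + (k+1 : ℕ) * h := by push_cast; ring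
      rw [this] at h3
      intro t ht
      rw [Function.iterate_succ_apply' (tonelliF G t₀ x₀ h) (k+1), h3 ht,
        ← Function.iterate_succ_apply' (tonelliF G t₀ x₀ h) k]

lemma tonelliApprox_integral_eq (hG : Continuous (Function.uncurry G))
    (hb : ∀ t x, ‖G t x‖ ≤ C) (hδ : 0 < δ) (n : ℕ) {t : ℝ} (ht : t ≤ t₀ + δ) :
    tonelliApprox G t₀ x₀ δ n t
      = x₀ + ∫ s in t₀..(max t₀ (t - δ/(n+1))), G s (tonelliApprox G t₀ x₀ δ n s) := by
  have hh : (0:ℝ) < δ/(n+1) := by positivity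
  have key := tonelliF_iterate_eqOn (t₀ := t₀) (x₀ := x₀) hG hb hh.le (n+2)
    (show t ∈ Iic (t₀ + (n+2 : ℕ)*(δ/(n+1))) by
      simp only [mem_Iic]
      have : δ ≤ ((n:ℝ)+2) * (δ/((n:ℝ)+1)) := by
        rw [mul_div_assoc', le_div_iff₀ (by positivity)]
        nlinarith
      push_cast
      linarith)
  rw [Function.iterate_succ_apply' (tonelliF G t₀ x₀ (δ/(n+1))) (n+2)] at key
  unfold tonelliApprox
  unfold tonelliF at key
  exact key.symm

end Approx

section Main

variable {G : ℝ → E → E} {t₀ : ℝ} {x₀ : E} {δ : ℝ}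

lemma tonelliApprox_continuous {C : ℝ≥0} (hG : Continuous (Function.uncurry G))
    (hb : ∀ t x, ‖G t x‖ ≤ C) (n : ℕ) : Continuous (tonelliApprox G t₀ x₀ δ n) :=
  tonelliF_iterate_continuous hG hb _

lemma tonelliApprox_lipschitz {C : ℝ≥0} (hG : Continuous (Function.uncurry G))
    (hb : ∀ t x, ‖G t x‖ ≤ C) (n : ℕ) : LipschitzWith C (tonelliApprox G t₀ x₀ δ n) := by
  unfold tonelliApprox
  rw [Function.iterate_succ_apply']
  exact tonelliF_lipschitz hG hb _ (tonelliF_iterate_continuous hG hb _)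

lemma tonelliApprox_dist_le {C : ℝ≥0} (hG : Continuous (Function.uncurry G))
    (hb : ∀ t x, ‖G t x‖ ≤ C) (hδ : 0 < δ) (n : ℕ) {t : ℝ} (ht : t₀ ≤ t) :
    ‖tonelliApprox G t₀ x₀ δ n t - x₀‖ ≤ C * (t - t₀) := by
  unfold tonelliApprox
  rw [Function.iterate_succ_apply']
  exact tonelliF_dist_le hG hb (by positivity) _ (tonelliF_iterate_continuous hG hb _) t ht

/-- **Peano existence theorem** (local, to the right), for a globally bounded continuous
vector field. -/
theorem peano_exists (G : ℝ → E → E) (hG : Continuous (Function.uncurry G)) (C : ℝ≥0)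
    (hb : ∀ t x, ‖G t x‖ ≤ C) (t₀ : ℝ) (x₀ : E) (δ : ℝ) (hδ : 0 < δ) :
    ∃ x : ℝ → E, Continuous x ∧ x t₀ = x₀ ∧ ∀ t ∈ Icc t₀ (t₀+δ),
      ‖x t - x₀‖ ≤ C*(t - t₀) ∧ HasDerivWithinAt x (G t (x t)) (Icc t₀ (t₀+δ)) t := by
  have hIcc : (t₀ : ℝ) ≤ t₀ + δ := by linarith
  set X := Icc t₀ (t₀ + δ) with hX
  haveI : CompactSpace X := isCompact_iff_compactSpace.mp isCompact_Icc
  -- the approximations, as elements of C(X, E)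
  set y : ℕ → C(X, E) := fun n =>
    ⟨fun s => tonelliApprox G t₀ x₀ δ n s, (tonelliApprox_continuous hG hb n).comp continuous_subtype_val⟩ with hy
  set S : Set C(X, E) :=
    {f | LipschitzWith C ⇑f ∧ ∀ s : X, f s ∈ Metric.closedBall x₀ (C*δ)} with hS
  have hmem : ∀ n, y n ∈ S := by
    intro n
    constructor
    · have := (tonelliApprox_lipschitz hG hb n (t₀ := t₀) (x₀ := x₀) (δ := δ)).comp
        (LipschitzWith.subtype_val X)
      rwa [mul_one] at this
    · intro s
      rw [Metric.mem_closedBall, dist_eq_norm]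
      calc ‖tonelliApprox G t₀ x₀ δ n s - x₀‖ ≤ C * ((s:ℝ) - t₀) := tonelliApprox_dist_le hG hb hδ n s.2.1
        _ ≤ C * δ := by
            have := s.2.2
            have := s.2.1
            have : (s:ℝ) - t₀ ≤ δ := by linarith [s.2.2]
            exact mul_le_mul_of_nonneg_left this C.coe_nonneg
  -- Arzelà–Ascoli: S is compact
  have hS1 : IsCompact (ContinuousMap.toFun '' S) := by
    have himage : ContinuousMap.toFun '' S
        = {g : X → E | LipschitzWith C g ∧ ∀ s : X, g s ∈ Metric.closedBall x₀ (C*δ)} := by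
      ext g
      constructor
      · rintro ⟨f, hf, rfl⟩; exact hf
      · rintro ⟨h1, h2⟩; exact ⟨⟨g, h1.continuous⟩, ⟨h1, h2⟩, rfl⟩
    rw [himage]
    have hsub : {g : X → E | LipschitzWith C g ∧ ∀ s : X, g s ∈ Metric.closedBall x₀ (C*δ)}
        ⊆ {g : X → E | ∀ s : X, g s ∈ Metric.closedBall x₀ (C*δ)} := fun g hg => hg.2
    refine IsCompact.of_isClosed_subset (isCompact_pi_infinite
      (fun _ => isCompact_closedBall x₀ (C*δ))) ?_ hsub
    have hsplit : {g : X → E | LipschitzWith C g ∧ ∀ s : X, g s ∈ Metric.closedBall x₀ (C*δ)}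
        = {g : X → E | LipschitzWith C g}
          ∩ ⋂ (s : X), (fun g : X → E => g s) ⁻¹' Metric.closedBall x₀ (C*δ) := by
      ext g; simp [mem_iInter, mem_setOf_eq]
    rw [hsplit]
    exact (isClosed_setOf_lipschitzWith C).inter (isClosed_iInter fun s =>
      IsClosed.preimage (continuous_apply s) Metric.isClosed_closedBall)
  have hS2 : Equicontinuous ((↑) : S → X → E) := by
    apply Metric.equicontinuous_of_continuity_modulus (fun r => C * r)
    · have : Continuous (fun r : ℝ => (C:ℝ) * r) := continuous_const.mul continuous_id
      simpa using this.tendsto 0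
    · intro a b f
      exact f.2.1.dist_le_mul a b
  have hScompact : IsCompact S := ArzelaAscoli.isCompact_of_equicontinuous S hS1 hS2
  obtain ⟨f, hfS, φ, hφ, hconv⟩ := hScompact.tendsto_subseq hmem
  -- the candidate solution
  set x : ℝ → E := fun t => f (projIcc t₀ (t₀+δ) hIcc t) with hxdef
  have hxcont : Continuous x := f.continuous.comp continuous_projIcc
  have hxeq : ∀ t (ht : t ∈ X), x t = f ⟨t, ht⟩ := by
    intro t ht
    simp only [hxdef, projIcc_of_mem hIcc ht]
  -- pointwise convergence of the subsequence
  have hpt : ∀ s : X, Filter.Tendsto (fun k => tonelliApprox G t₀ x₀ δ (φ k) s) atTop (𝓝 (f s)) := by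
    intro s
    exact ((continuous_eval_const s).tendsto f).comp hconv
  have hpt' : ∀ (s : ℝ) (hs : s ∈ X), Filter.Tendsto (fun k => tonelliApprox G t₀ x₀ δ (φ k) s) atTop (𝓝 (x s)) := by
    intro s hs
    rw [hxeq s hs]
    exact hpt ⟨s, hs⟩
  -- the integral equation for the limit
  have hinteq : ∀ t ∈ X, x t = x₀ + ∫ s in t₀..t, G s (x s) := by
    intro t ht
    have hcontk : ∀ k, Continuous (fun s => G s (tonelliApprox G t₀ x₀ δ (φ k) s)) := fun k =>
      hG.comp (continuous_id.prodMk (tonelliApprox_continuous hG hb (φ k)))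
    have hintk : ∀ k a b, IntervalIntegrable (fun s => G s (tonelliApprox G t₀ x₀ δ (φ k) s)) MeasureTheory.volume a b :=
      fun k a b => (hcontk k).intervalIntegrable a b
    -- dominated convergence for the main integral
    have hmain : Filter.Tendsto (fun k => ∫ s in t₀..t, G s (tonelliApprox G t₀ x₀ δ (φ k) s)) atTop
        (𝓝 (∫ s in t₀..t, G s (x s))) := by
      apply intervalIntegral.tendsto_integral_filter_of_dominated_convergence (fun _ => (C:ℝ))
      · exact Filter.Eventually.of_forall fun k => (hcontk k).aestronglyMeasurable
      · exact Filter.Eventually.of_forall fun k =>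
          Filter.Eventually.of_forall fun s _ => hb s _
      · exact intervalIntegrable_const
      · apply Filter.Eventually.of_forall
        intro s hs
        rw [uIoc_of_le ht.1] at hs
        have hsX : s ∈ X := ⟨hs.1.le, hs.2.trans ht.2⟩
        have hGs : Continuous (G s) := hG.comp (continuous_const.prodMk continuous_id)
        exact (hGs.continuousAt.tendsto).comp (hpt' s hsX)
    -- the tail integrals tend to zero
    have htail : Filter.Tendsto
        (fun k => ∫ s in (max t₀ (t - δ/(φ k + 1)))..t, G s (tonelliApprox G t₀ x₀ δ (φ k) s)) atTop (𝓝 0) := by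
      rw [tendsto_zero_iff_norm_tendsto_zero]
      refine squeeze_zero (g := fun k : ℕ => (C:ℝ) * (δ/((k:ℝ)+1))) (fun k => norm_nonneg _)
        ?_ ?_
      · intro k
        calc ‖∫ s in (max t₀ (t - δ/(φ k + 1)))..t, G s (tonelliApprox G t₀ x₀ δ (φ k) s)‖
            ≤ C * |t - max t₀ (t - δ/(φ k + 1))| :=
              intervalIntegral.norm_integral_le_of_norm_le_const fun s _ => hb s _
          _ ≤ (C:ℝ) * (δ/(k+1)) := by
              refine mul_le_mul_of_nonneg_left ?_ C.coe_nonneg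
              have h1 : (0:ℝ) < δ/(φ k + 1) := by positivity
              have h2 : max t₀ (t - δ/(φ k + 1)) ≤ t := max_le ht.1 (by linarith)
              have h3 : t - δ/(φ k + 1) ≤ max t₀ (t - δ/(φ k + 1)) := le_max_right _ _
              have h4 : δ/(φ k + 1) ≤ δ/(k+1) := by
                have hk : (k:ℝ) ≤ (φ k : ℝ) := Nat.cast_le.mpr hφ.le_apply
                exact div_le_div_of_nonneg_left hδ.le (by positivity) (by linarith)
              rw [abs_of_nonneg (by linarith)]
              linarith
      · have : Filter.Tendsto (fun k : ℕ => (C:ℝ) * (δ/(k+1))) atTop (𝓝 ((C:ℝ) * 0)) := by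
          apply Filter.Tendsto.const_mul
          have h : Filter.Tendsto (fun n : ℕ => 1 / ((n : ℝ) + 1)) atTop (𝓝 0) := tendsto_one_div_add_atTop_nhds_zero_nat
          have := h.const_mul δ
          simpa [div_eq_mul_inv, mul_comm] using this
        simpa using this
    -- put things together
    have hdecomp : ∀ k, tonelliApprox G t₀ x₀ δ (φ k) t
        = x₀ + ((∫ s in t₀..t, G s (tonelliApprox G t₀ x₀ δ (φ k) s))
            - ∫ s in (max t₀ (t - δ/(φ k + 1)))..t, G s (tonelliApprox G t₀ x₀ δ (φ k) s)) := by
      intro k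
      have heq := tonelliApprox_integral_eq (x₀ := x₀) hG hb hδ (φ k) (t := t) ht.2
      have hsub := intervalIntegral.integral_interval_sub_left (hintk k t₀ t)
        (hintk k t₀ (max t₀ (t - δ/(φ k + 1))))
      rw [heq, ← hsub, sub_sub_cancel]
    have hlim2 : Filter.Tendsto (fun k => tonelliApprox G t₀ x₀ δ (φ k) t) atTop
        (𝓝 (x₀ + ((∫ s in t₀..t, G s (x s)) - 0))) := by
      simp_rw [hdecomp]
      exact Filter.Tendsto.const_add x₀ (hmain.sub htail)
    have := tendsto_nhds_unique (hpt' t ht) hlim2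
    rw [this, sub_zero]
  -- initial value
  have hx₀ : x t₀ = x₀ := by
    have := hinteq t₀ (left_mem_Icc.mpr hIcc)
    rwa [intervalIntegral.integral_same, add_zero] at this
  refine ⟨x, hxcont, hx₀, fun t ht => ?_⟩
  have hgx : Continuous (fun s => G s (x s)) := hG.comp (continuous_id.prodMk hxcont)
  constructor
  · rw [hinteq t ht, add_sub_cancel_left]
    calc ‖∫ s in t₀..t, G s (x s)‖ ≤ C * |t - t₀| :=
          intervalIntegral.norm_integral_le_of_norm_le_const fun s _ => hb s _
      _ = C * (t - t₀) := by rw [abs_of_nonneg (by linarith [ht.1])]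
  · have hP : HasDerivAt (fun u => x₀ + ∫ s in t₀..u, G s (x s)) (G t (x t)) t := by
      apply HasDerivAt.const_add
      exact intervalIntegral.integral_hasDerivAt_right (hgx.intervalIntegrable t₀ t)
        (hgx.stronglyMeasurable.stronglyMeasurableAtFilter) hgx.continuousAt
    exact (hP.hasDerivWithinAt).congr (fun s hs => hinteq s hs) (hinteq t ht)

end Main

section Retract

variable {F : Type*} [NormedAddCommGroup F] [NormedSpace ℝ F]

/-- Radial retraction onto a closed ball. -/
noncomputable def ballRetract (x₀ : F) (r : ℝ) : F → F :=
  fun v => x₀ + (r / max r ‖v - x₀‖) • (v - x₀)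

lemma ballRetract_continuous (x₀ : F) {r : ℝ} (hr : 0 < r) :
    Continuous (ballRetract x₀ r) := by
  have hden : Continuous fun v : F => max r ‖v - x₀‖ :=
    continuous_const.max (continuous_id.sub continuous_const).norm
  have hden0 : ∀ v : F, max r ‖v - x₀‖ ≠ 0 :=
    fun v => ne_of_gt (lt_of_lt_of_le hr (le_max_left _ _))
  exact continuous_const.add
    (((continuous_const.div hden hden0)).smul (continuous_id.sub continuous_const))

lemma ballRetract_mem (x₀ : F) {r : ℝ} (hr : 0 < r) (v : F) :
    ballRetract x₀ r v ∈ Metric.closedBall x₀ r := by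
  rw [Metric.mem_closedBall, dist_eq_norm, ballRetract, add_sub_cancel_left, norm_smul]
  have hM : (0:ℝ) < max r ‖v - x₀‖ := lt_of_lt_of_le hr (le_max_left _ _)
  rw [Real.norm_eq_abs, abs_of_nonneg (by positivity)]
  rw [div_mul_eq_mul_div, div_le_iff₀ hM]
  exact mul_le_mul_of_nonneg_left (le_max_right _ _) hr.le

lemma ballRetract_eq (x₀ : F) {r : ℝ} (hr : 0 < r) {v : F} (hv : ‖v - x₀‖ ≤ r) :
    ballRetract x₀ r v = v := by
  rw [ballRetract, max_eq_left hv, div_self hr.ne', one_smul, add_sub_cancel]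

end Retract


/-- Existence of a maximal solution of the initial value problem
`ξ' = H(t, ξ)`, `ξ(t₀) = ξ⁰ ∈ Ω`, where `Ω ⊆ ℝⁿ` is a nonempty open set and
`H` is continuous on `[t₀,∞) × Ω` and locally Lipschitz in the state there. -/
theorem maximal_solution_exists
    (n : ℕ) (Ω : Set (EuclideanSpace ℝ (Fin n))) (hne : Ω.Nonempty) (hΩ : IsOpen Ω)
    (t₀ : ℝ) (H : ℝ → EuclideanSpace ℝ (Fin n) → EuclideanSpace ℝ (Fin n))
    (hcont : ContinuousOn (fun p : ℝ × EuclideanSpace ℝ (Fin n) => H p.1 p.2)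
      (Set.Ici t₀ ×ˢ Ω))
    (hlip : ∀ t ∈ Set.Ici t₀, ∀ x ∈ Ω,
      ∃ K : NNReal, ∃ s ∈ nhdsWithin x Ω, LipschitzOnWith K (H t) s)
    (ξ₀ : EuclideanSpace ℝ (Fin n)) (hξ₀ : ξ₀ ∈ Ω) :
    ∃ tmax : EReal, (t₀ : EReal) < tmax ∧
      ∃ ξ : ℝ → EuclideanSpace ℝ (Fin n),
        ξ t₀ = ξ₀ ∧
        (∀ t : ℝ, t₀ ≤ t → (t : EReal) < tmax →
          ξ t ∈ Ω ∧ HasDerivWithinAt ξ (H t (ξ t)) (Set.Ici t₀) t) ∧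
        ¬ ∃ t₁ : ℝ, tmax < (t₁ : EReal) ∧
          ∃ ζ : ℝ → EuclideanSpace ℝ (Fin n),
            ζ t₀ = ξ₀ ∧
            (∀ t ∈ Set.Ico t₀ t₁,
              ζ t ∈ Ω ∧ HasDerivWithinAt ζ (H t (ζ t)) (Set.Ici t₀) t) ∧
            (∀ t : ℝ, t₀ ≤ t → (t : EReal) < tmax → ζ t = ξ t) := by
  classical
  -- ## Step 1: a closed ball around ξ₀ inside Ω
  obtain ⟨ε, hε0, hball⟩ := Metric.isOpen_iff.mp hΩ ξ₀ hξ₀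
  set r : ℝ := ε/2 with hrdef
  have hr0 : 0 < r := by positivity
  have hrΩ : Metric.closedBall ξ₀ r ⊆ Ω :=
    (Metric.closedBall_subset_ball (by simp only [hrdef]; linarith)).trans hball
  -- ## Step 2: a bound for H on a compact set
  have hKcomp : IsCompact ((Icc t₀ (t₀+1)) ×ˢ Metric.closedBall ξ₀ r) :=
    isCompact_Icc.prod (isCompact_closedBall _ _)
  have hKsub : (Icc t₀ (t₀+1)) ×ˢ Metric.closedBall ξ₀ r ⊆ Set.Ici t₀ ×ˢ Ω :=
    Set.prod_mono (Icc_subset_Ici_self) hrΩ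
  obtain ⟨C₀, hC₀⟩ := hKcomp.exists_bound_of_continuousOn (hcont.mono hKsub)
  set C : ℝ≥0 := Real.toNNReal (max C₀ 1) with hCdef
  have hCcoe : (C : ℝ) = max C₀ 1 := Real.coe_toNNReal _ (zero_le_one.trans (le_max_right _ _))
  have hC1 : (1:ℝ) ≤ (C:ℝ) := by rw [hCcoe]; exact le_max_right _ _
  have hCpos : (0:ℝ) < (C:ℝ) := lt_of_lt_of_le one_pos hC1
  -- ## Step 3: globally defined bounded continuous extension G of H
  set τ : ℝ → ℝ := fun t => min (max t t₀) (t₀+1) with hτdef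
  have hτcont : Continuous τ := (continuous_id.max continuous_const).min continuous_const
  have hτmem : ∀ t, τ t ∈ Icc t₀ (t₀+1) := fun t =>
    ⟨le_min (le_max_right _ _) (by linarith), min_le_right _ _⟩
  have hτeq : ∀ t ∈ Icc t₀ (t₀+1), τ t = t := fun t ht => by
    simp only [hτdef]
    rw [max_eq_left ht.1, min_eq_left ht.2]
  set B : EuclideanSpace ℝ (Fin n) → EuclideanSpace ℝ (Fin n) := ballRetract ξ₀ r with hBdef
  set G : ℝ → EuclideanSpace ℝ (Fin n) → EuclideanSpace ℝ (Fin n) :=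
    fun t v => H (τ t) (B v) with hGdef
  have hGcont : Continuous (Function.uncurry G) := by
    have hmap : Continuous (fun p : ℝ × EuclideanSpace ℝ (Fin n) => (τ p.1, B p.2)) :=
      (hτcont.comp continuous_fst).prodMk
        ((ballRetract_continuous ξ₀ hr0).comp continuous_snd)
    have hmem : ∀ p : ℝ × EuclideanSpace ℝ (Fin n),
        (τ p.1, B p.2) ∈ Set.Ici t₀ ×ˢ Ω := fun p =>
      Set.mem_prod.mpr ⟨(hτmem p.1).1, hrΩ (ballRetract_mem ξ₀ hr0 p.2)⟩
    exact hcont.comp_continuous hmap hmem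
  have hGbound : ∀ t v, ‖G t v‖ ≤ (C:ℝ) := by
    intro t v
    have := hC₀ (τ t, B v) (Set.mem_prod.mpr ⟨hτmem t, ballRetract_mem ξ₀ hr0 v⟩)
    rw [hCcoe]
    exact this.trans (le_max_left _ _)
  -- ## Step 4: local solution via Peano's theorem
  set δ : ℝ := min 1 (r / C) with hδdef
  have hδ0 : 0 < δ := lt_min one_pos (by positivity)
  have hδ1 : δ ≤ 1 := min_le_left _ _
  have hCδ : (C:ℝ) * δ ≤ r := by
    have h1 : δ ≤ r / C := min_le_right _ _
    calc (C:ℝ) * δ ≤ (C:ℝ) * (r / C) := mul_le_mul_of_nonneg_left h1 hCpos.le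
      _ = r := by field_simp
  obtain ⟨x, hxcont, hx0, hxsol⟩ := peano_exists G hGcont C hGbound t₀ ξ₀ δ hδ0
  -- x is a solution of the original equation on [t₀, t₀+δ], staying in the ball
  have hxball : ∀ t ∈ Icc t₀ (t₀+δ), ‖x t - ξ₀‖ ≤ r := by
    intro t ht
    calc ‖x t - ξ₀‖ ≤ C * (t - t₀) := (hxsol t ht).1
      _ ≤ C * δ := mul_le_mul_of_nonneg_left (by linarith [ht.2]) hCpos.le
      _ ≤ r := hCδ
  have hGxeq : ∀ t ∈ Icc t₀ (t₀+δ), G t (x t) = H t (x t) := by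
    intro t ht
    simp only [hGdef]
    rw [hτeq t ⟨ht.1, ht.2.trans (by linarith)⟩, hBdef, ballRetract_eq ξ₀ hr0 (hxball t ht)]
  -- the solution property
  have hxSolIci : ∀ t : ℝ, t₀ ≤ t → t < t₀ + δ →
      x t ∈ Ω ∧ HasDerivWithinAt x (H t (x t)) (Set.Ici t₀) t := by
    intro t ht htlt
    have htIcc : t ∈ Icc t₀ (t₀+δ) := ⟨ht, htlt.le⟩
    refine ⟨hrΩ (by rw [Metric.mem_closedBall, dist_eq_norm]; exact hxball t htIcc), ?_⟩
    have hD : HasDerivWithinAt x (H t (x t)) (Icc t₀ (t₀+δ)) t := by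
      rw [← hGxeq t htIcc]; exact (hxsol t htIcc).2
    apply hD.mono_of_mem_nhdsWithin
    rw [show Icc t₀ (t₀+δ) = Set.Ici t₀ ∩ Set.Iic (t₀+δ) from (Set.Ici_inter_Iic).symm]
    exact Filter.inter_mem self_mem_nhdsWithin
      (mem_nhdsWithin_of_mem_nhds (Iic_mem_nhds htlt))
  -- ## Step 5: Zorn's lemma on partial solutions
  let Sol : EReal × (ℝ → EuclideanSpace ℝ (Fin n)) → Prop := fun p =>
    p.2 t₀ = ξ₀ ∧ ∀ t : ℝ, t₀ ≤ t → (t : EReal) < p.1 →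
      p.2 t ∈ Ω ∧ HasDerivWithinAt p.2 (H t (p.2 t)) (Set.Ici t₀) t
  let α := {p : EReal × (ℝ → EuclideanSpace ℝ (Fin n)) // (t₀ : EReal) < p.1 ∧ Sol p}
  let rel : α → α → Prop := fun p q =>
    p.1.1 ≤ q.1.1 ∧ ∀ t : ℝ, t₀ ≤ t → (t : EReal) < p.1.1 → q.1.2 t = p.1.2 t
  -- the base element
  have hbase : (t₀ : EReal) < ((t₀ + δ : ℝ) : EReal) ∧ Sol (((t₀ + δ : ℝ) : EReal), x) := by
    refine ⟨EReal.coe_lt_coe_iff.mpr (by linarith), hx0, ?_⟩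
    intro t ht htlt
    exact hxSolIci t ht (EReal.coe_lt_coe_iff.mp htlt)
  let base : α := ⟨(((t₀ + δ : ℝ) : EReal), x), hbase⟩
  -- transitivity of rel
  have htrans : ∀ {p q s : α}, rel p q → rel q s → rel p s := by
    rintro p q s ⟨h1, h2⟩ ⟨h3, h4⟩
    refine ⟨h1.trans h3, fun t ht htlt => ?_⟩
    rw [h4 t ht (lt_of_lt_of_le htlt h1), h2 t ht htlt]
  -- chains are bounded
  have hchains : ∀ c : Set α, IsChain rel c → ∃ ub, ∀ a ∈ c, rel a ub := by
    intro c hc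
    rcases c.eq_empty_or_nonempty with rfl | ⟨p₀, hp₀⟩
    · exact ⟨base, fun a ha => absurd ha (Set.notMem_empty a)⟩
    set b : EReal := sSup ((fun p : α => p.1.1) '' c) with hbdef
    set f : ℝ → EuclideanSpace ℝ (Fin n) := fun t =>
      if h : ∃ p : α, p ∈ c ∧ t₀ ≤ t ∧ (t : EReal) < p.1.1 then h.choose.1.2 t else ξ₀
      with hfdef
    -- agreement of f with every member of the chain
    have hagree : ∀ p ∈ c, ∀ t : ℝ, t₀ ≤ t → (t : EReal) < p.1.1 → f t = p.1.2 t := by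
      intro p hp t ht htlt
      have hex : ∃ q : α, q ∈ c ∧ t₀ ≤ t ∧ (t : EReal) < q.1.1 := ⟨p, hp, ht, htlt⟩
      simp only [hfdef, dif_pos hex]
      obtain ⟨hqc, hqt, hqlt⟩ := hex.choose_spec
      by_cases hpq : p = hex.choose
      · rw [← hpq]
      · rcases hc hp hqc hpq with h | h
        · exact h.2 t ht htlt
        · exact (h.2 t ht hqlt).symm
    -- bounds
    have hle : ∀ p ∈ c, p.1.1 ≤ b := fun p hp => le_sSup ⟨p, hp, rfl⟩
    have hlt : ∀ e : EReal, e < b → ∃ p ∈ c, e < p.1.1 := by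
      intro e he
      obtain ⟨e', he', hee'⟩ := lt_sSup_iff.mp he
      obtain ⟨p, hp, rfl⟩ := he'
      exact ⟨p, hp, hee'⟩
    have ht₀b : (t₀ : EReal) < b := lt_of_lt_of_le p₀.2.1 (hle p₀ hp₀)
    -- f t₀ = ξ₀
    have hf₀ : f t₀ = ξ₀ := by
      obtain ⟨p, hp, hplt⟩ := hlt (t₀ : EReal) ht₀b
      rw [hagree p hp t₀ le_rfl hplt]
      exact p.2.2.1
    -- (b, f) is a solution
    have hSolf : Sol (b, f) := by
      refine ⟨hf₀, fun t ht htlt => ?_⟩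
      obtain ⟨p, hp, hplt⟩ := hlt (t : EReal) htlt
      have hft : f t = p.1.2 t := hagree p hp t ht hplt
      have hsolp := p.2.2.2 t ht hplt
      constructor
      · show f t ∈ Ω
        rw [hft]; exact hsolp.1
      have hU : {s : ℝ | (s : EReal) < p.1.1} ∈ 𝓝 t :=
        (isOpen_Iio.preimage continuous_coe_real_ereal).mem_nhds hplt
      have hUev : f =ᶠ[𝓝[Set.Ici t₀] t] p.1.2 := by
        refine Filter.eventuallyEq_of_mem
          (Filter.inter_mem (mem_nhdsWithin_of_mem_nhds hU) self_mem_nhdsWithin) ?_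
        intro s hs
        exact hagree p hp s hs.2 hs.1
      show HasDerivWithinAt f (H t ((b, f).2 t)) (Set.Ici t₀) t
      have : H t ((b, f).2 t) = H t (p.1.2 t) := by show H t (f t) = _; rw [hft]
      rw [this]
      exact hsolp.2.congr_of_eventuallyEq hUev hft
    exact ⟨⟨(b, f), ht₀b, hSolf⟩, fun p hp => ⟨hle p hp, fun t ht htlt => hagree p hp t ht htlt⟩⟩
  -- maximal element
  obtain ⟨m, hm⟩ := exists_maximal_of_chains_bounded hchains (fun {a b c} => htrans)
  refine ⟨m.1.1, m.2.1, m.1.2, m.2.2.1, m.2.2.2, ?_⟩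
  rintro ⟨t₁, ht₁, ζ, hζ₀, hζsol, hζagree⟩
  have ht₀t₁ : (t₀ : EReal) < (t₁ : ℝ) := m.2.1.trans ht₁
  have ha : (t₀ : EReal) < ((t₁ : ℝ) : EReal) ∧ Sol (((t₁ : ℝ) : EReal), ζ) := by
    refine ⟨ht₀t₁, hζ₀, fun t ht htlt => ?_⟩
    exact hζsol t ⟨ht, EReal.coe_lt_coe_iff.mp htlt⟩
  have hrel : rel m ⟨(((t₁ : ℝ) : EReal), ζ), ha⟩ := ⟨ht₁.le, fun t ht htlt => hζagree t ht htlt⟩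
  have := (hm _ hrel).1
  exact absurd this (not_le.mpr ht₁)
end

section
/- Let t₀ < T ≤ ∞, let E be a real inner product space, let f : ℝ → E be differentiable at every t ∈ [t₀, T) with derivative f'(t), and let c ≥ 0. Suppose that for every t ∈ (t₀, T), ‖f(t)‖ > c implies ⟨f(t), f'(t)⟩ ≤ 0. Then ‖f(t)‖ ≤ max{‖f(t₀)‖, c} for every t ∈ [t₀, T). -/
open scoped RealInnerProductSpace

/-- Vector Lyapunov-type invariance: if `f : ℝ → E` (E a real inner product space)
is differentiable on `[t₀,T)` with derivative `f'`, `c ≥ 0`, and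
`⟪f(t), f'(t)⟫ ≤ 0` whenever `‖f(t)‖ > c`, then `‖f(t)‖ ≤ max ‖f t₀‖ c`
on `[t₀,T)`. Here `T ∈ (t₀, ∞]` is an extended real. -/
theorem vector_lyapunov_invariance
    (E : Type*) [NormedAddCommGroup E] [InnerProductSpace ℝ E]
    (t₀ : ℝ) (T : EReal) (hT : (t₀ : EReal) < T)
    (f f' : ℝ → E) (c : ℝ) (hc : 0 ≤ c)
    (hderiv : ∀ t : ℝ, t₀ ≤ t → (t : EReal) < T → HasDerivAt f (f' t) t)
    (hlyap : ∀ t : ℝ, t₀ < t → (t : EReal) < T → ‖f t‖ > c → ⟪f t, f' t⟫ ≤ 0) :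
    ∀ t : ℝ, t₀ ≤ t → (t : EReal) < T → ‖f t‖ ≤ max ‖f t₀‖ c := by
  intro t₁ ht₁ ht₁T
  set M : ℝ := max ‖f t₀‖ c with hM
  have hM0 : 0 ≤ M := le_trans (norm_nonneg _) (le_max_left _ _)
  by_contra hcon
  push_neg at hcon
  set g : ℝ → ℝ := fun s => ‖f s‖ ^ 2 with hg
  -- derivative of g at points of [t₀, T)
  have hgd : ∀ s : ℝ, t₀ ≤ s → (s : EReal) < T →
      HasDerivAt g (2 * ⟪f s, f' s⟫) s := by
    intro s hs hsT
    have h := (hderiv s hs hsT).inner ℝ (hderiv s hs hsT)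
    have : HasDerivAt (fun t => ⟪f t, f t⟫) (2 * ⟪f s, f' s⟫) s := by
      rw [show (2 * ⟪f s, f' s⟫) = ⟪f s, f' s⟫ + ⟪f' s, f s⟫ by rw [real_inner_comm (f s) (f' s)]; ring]
      exact h
    refine this.congr_of_eventuallyEq ?_
    filter_upwards with x
    simp [g, real_inner_self_eq_norm_sq]
  have hTle : ∀ s : ℝ, s ≤ t₁ → (s : EReal) < T := fun s hs =>
    lt_of_le_of_lt (EReal.coe_le_coe_iff.mpr hs) ht₁T
  -- continuity of g on [t₀, t₁]
  have hgc : ContinuousOn g (Set.Icc t₀ t₁) := by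
    intro s hs
    exact ((hgd s hs.1 (hTle s hs.2)).continuousAt).continuousWithinAt
  have ht01 : t₀ ≤ t₁ := ht₁
  -- the set where g ≤ M²
  set S : Set ℝ := {s | s ∈ Set.Icc t₀ t₁ ∧ g s ≤ M ^ 2} with hS
  have hSne : S.Nonempty := ⟨t₀, ⟨le_refl _, ht01⟩, by
    have : ‖f t₀‖ ≤ M := le_max_left _ _
    simpa [g] using pow_le_pow_left₀ (norm_nonneg _) this 2⟩
  have hSbdd : BddAbove S := ⟨t₁, fun s hs => hs.1.2⟩
  have ht₀S : t₀ ∈ S := ⟨⟨le_refl _, ht01⟩, by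
    have : ‖f t₀‖ ≤ M := le_max_left _ _
    simpa [g] using pow_le_pow_left₀ (norm_nonneg _) this 2⟩
  set s₀ : ℝ := sSup S with hs₀
  have hs₀mem : s₀ ∈ Set.Icc t₀ t₁ :=
    ⟨le_csSup hSbdd ht₀S, csSup_le hSne fun s hs => hs.1.2⟩
  have hSclosed : IsClosed S := by
    have : S = Set.Icc t₀ t₁ ∩ g ⁻¹' Set.Iic (M ^ 2) := by
      ext s; simp [hS, Set.mem_inter_iff]
    rw [this]
    exact hgc.preimage_isClosed_of_isClosed isClosed_Icc isClosed_Iic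
  have hs₀S : s₀ ∈ S := hSclosed.csSup_mem hSne hSbdd
  have hgt₁ : M ^ 2 < g t₁ := by
    simpa [g] using pow_lt_pow_left₀ hcon hM0 two_ne_zero
  have hs₀lt : s₀ < t₁ := by
    rcases lt_or_eq_of_le hs₀mem.2 with h | h
    · exact h
    · have h2 := hs₀S.2
      rw [h] at h2
      exact absurd h2 (not_le.mpr hgt₁)
  have hIoc : ∀ s ∈ Set.Ioc s₀ t₁, M ^ 2 < g s := by
    intro s hs
    by_contra h
    push_neg at h
    have hsS : s ∈ S := ⟨⟨hs₀mem.1.trans hs.1.le, hs.2⟩, h⟩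
    exact absurd (le_csSup hSbdd hsS) (not_le.mpr hs.1)
  have hanti : AntitoneOn g (Set.Icc s₀ t₁) := by
    refine antitoneOn_of_deriv_nonpos (convex_Icc _ _) ?_ ?_ ?_
    · exact hgc.mono (Set.Icc_subset_Icc hs₀mem.1 le_rfl)
    · rw [interior_Icc]
      intro x hx
      exact ((hgd x (hs₀mem.1.trans hx.1.le) (hTle x hx.2.le)).differentiableAt).differentiableWithinAt
    · rw [interior_Icc]
      intro x hx
      have hxd := hgd x (hs₀mem.1.trans hx.1.le) (hTle x hx.2.le)
      rw [hxd.deriv]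
      have hfx : c < ‖f x‖ := by
        by_contra h
        push_neg at h
        have h1 : g x ≤ c ^ 2 := by
          simpa [g] using pow_le_pow_left₀ (norm_nonneg _) h 2
        have h2 : c ^ 2 ≤ M ^ 2 := pow_le_pow_left₀ hc (le_max_right _ _) 2
        exact absurd (h1.trans h2) (not_le.mpr (hIoc x ⟨hx.1, hx.2.le⟩))
      have := hlyap x (lt_of_le_of_lt hs₀mem.1 hx.1) (hTle x hx.2.le) hfx
      linarith
  have := hanti (Set.left_mem_Icc.mpr hs₀lt.le) (Set.right_mem_Icc.mpr hs₀lt.le) hs₀lt.le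
  exact absurd (this.trans hs₀S.2) (not_le.mpr hgt₁)
end

section
/- Let r > 0, let k ∈ {0,1,2} be a coordinate index, and let a, b ∈ ℝ³ with b = a + 2r·e_k (where e_k is the k-th standard basis vector). Define for a center c ∈ ℝ³ the half-open cube C(c) = { p ∈ ℝ³ : c_i − r ≤ p_i < c_i + r for each coordinate i }. Then for every point x on the line segment joining a and b, the open Euclidean ball of radius r centered at x is contained in C(a) ∪ C(b). -/
lemma coord_abs_le_norm (v : EuclideanSpace ℝ (Fin 3)) (i : Fin 3) : |v i| ≤ ‖v‖ := by
  rw [EuclideanSpace.norm_eq]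
  have h1 : |v i| = Real.sqrt (‖v i‖ ^ 2) := by
    rw [Real.sqrt_sq_eq_abs, abs_norm, Real.norm_eq_abs]
  rw [h1]
  apply Real.sqrt_le_sqrt
  exact Finset.single_le_sum (f := fun j => ‖v j‖ ^ 2)
    (fun j _ => by positivity) (Finset.mem_univ i)

/-- Adjacent-cell transition containment: if `b = a + 2r·e_k` and `C(c)` denotes the
half-open cube of half-side `r` centered at `c`, then for every `x` on the segment
joining `a` and `b`, the open Euclidean ball `B(x, r)` is contained in `C(a) ∪ C(b)`. -/
theorem ball_along_segment_subset_union_cubes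
    (r : ℝ) (hr : 0 < r) (k : Fin 3)
    (a b : EuclideanSpace ℝ (Fin 3))
    (hb : b = a + (2 * r) • EuclideanSpace.single k (1 : ℝ)) :
    let C : EuclideanSpace ℝ (Fin 3) → Set (EuclideanSpace ℝ (Fin 3)) :=
      fun c => {p | ∀ i : Fin 3, c i - r ≤ p i ∧ p i < c i + r}
    ∀ x ∈ segment ℝ a b, Metric.ball x r ⊆ C a ∪ C b := by
  intro C x hx p hp
  rw [segment_eq_image'] at hx
  obtain ⟨t, ⟨ht0, ht1⟩, hxt⟩ := hx
  have hba : b - a = (2 * r) • EuclideanSpace.single k (1 : ℝ) := by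
    rw [hb]; abel
  -- coordinate bounds on p from ball membership
  have hcoord : ∀ i : Fin 3, |p i - x i| < r := by
    intro i
    have := coord_abs_le_norm (p - x) i
    have hd : ‖p - x‖ < r := by
      rw [← dist_eq_norm]; exact Metric.mem_ball.mp hp
    calc |p i - x i| = |(p - x) i| := by simp [PiLp.sub_apply]
      _ ≤ ‖p - x‖ := coord_abs_le_norm _ _
      _ < r := hd
  have hxi : ∀ i : Fin 3, x i = a i + t * (2 * r) * (if i = k then 1 else 0) := by
    intro i
    rw [← hxt, hba]
    simp [PiLp.add_apply, PiLp.smul_apply, EuclideanSpace.single_apply, smul_eq_mul]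
  have hbi : ∀ i : Fin 3, b i = a i + (2 * r) * (if i = k then 1 else 0) := by
    intro i
    rw [hb]
    simp [PiLp.add_apply, PiLp.smul_apply, EuclideanSpace.single_apply, smul_eq_mul]
  -- off-axis coordinates: a i = b i = x i
  by_cases hcase : p k < a k + r
  · left
    intro i
    have hc := hcoord i
    rw [abs_sub_lt_iff] at hc
    rw [hxi i] at hc
    by_cases hik : i = k
    · subst hik
      simp only [if_pos rfl, eq_self_iff_true, if_true, mul_one] at hc
      constructor
      · nlinarith [hc.1, hc.2]
      · exact hcase
    · simp only [if_neg hik, mul_zero, add_zero] at hc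
      exact ⟨by linarith [hc.1], by linarith [hc.2]⟩
  · right
    intro i
    have hc := hcoord i
    rw [abs_sub_lt_iff] at hc
    rw [hxi i] at hc
    rw [hbi i]
    by_cases hik : i = k
    · subst hik
      simp only [if_pos rfl, eq_self_iff_true, if_true, mul_one] at hc ⊢
      push_neg at hcase
      constructor
      · linarith
      · nlinarith [hc.1, hc.2]
    · simp only [if_neg hik, mul_zero, add_zero] at hc ⊢
      exact ⟨by linarith [hc.1], by linarith [hc.2]⟩
end
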